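/- For a CSP instance I with incidence graph B and disjoint variable sets X, Y (with X together with its neighboring constraints connected in B): if S₁ and S₂ are two minimal X–Y separators and S₂ dominates S₁ (i.e., |S₂| ≤ |S₁| and the component of X in B − S₂ strictly contains the component of X in B − S₁), then S₂ disconnects S₁ \ S₂ from Y in B. -/

import Mathlib

structure CSPConstraint (V D : Type) where
  scope : List V
  rel : Set (List D)

namespace CSP

variable {V D : Type}

/-- Restriction of a constraint by a partial assignment `α` (variables assigned by `α`
are removed from the scope, tuples inconsistent with `α` are dropped and the assigned
coordinates are projected away). -/
def restrictC (C : CSPConstraint V D) (α : V → Option D) : CSPConstraint V D where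
  scope := C.scope.filter (fun v => (α v).isNone)
  rel := { t | ∃ s ∈ C.rel, s.length = C.scope.length ∧
      (∀ p ∈ C.scope.zip s, ∀ d, α p.1 = some d → p.2 = d) ∧
      t = ((C.scope.zip s).filter (fun p => (α p.1).isNone)).map Prod.snd }

/-- `α` is a partial assignment defined on exactly the variable set `S`. -/
def OnSet (α : V → Option D) (S : Set V) : Prop := ∀ v, (α v).isSome ↔ v ∈ S

def restrictI (I : Set (CSPConstraint V D)) (α : V → Option D) : Set (CSPConstraint V D) :=
  (fun C => restrictC C α) '' I

def varsOf (I : Set (CSPConstraint V D)) : Set V := ⋃ C ∈ I, {v | v ∈ C.scope}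

/-- A constraint language: a set of (arity, relation) pairs over domain `D`. -/
abbrev Language (D : Type) := Set (ℕ × Set (List D))

def inLang (Γ : Language D) (C : CSPConstraint V D) : Prop :=
  (C.scope.length, C.rel) ∈ Γ

/-- A language is closed under partial assignments. -/
def ClosedLang (Γ : Language D) : Prop :=
  ∀ (C : CSPConstraint ℕ D) (α : ℕ → Option D), inLang Γ C → inLang Γ (restrictC C α)

/-- Two constraints of `I` share a variable outside `X` (edge of the incidence graph
with the variables of `X` deleted, contracted to constraints). -/
def Linked (I : Set (CSPConstraint V D)) (X : Set V) (C₁ C₂ : CSPConstraint V D) : Prop :=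
  C₁ ∈ I ∧ C₂ ∈ I ∧ ∃ v, v ∉ X ∧ v ∈ C₁.scope ∧ v ∈ C₂.scope

/-- Same connected component of the incidence graph of `I` minus the variables `X`. -/
def SameComp (I : Set (CSPConstraint V D)) (X : Set V) :
    CSPConstraint V D → CSPConstraint V D → Prop :=
  Relation.ReflTransGen (Linked I X)

/-- Membership in the scattered class `CSP(Γ₁) ⊎ ⋯ ⊎ CSP(Γ_d)` : every connected
component of the incidence graph lies entirely in some `CSP(Γ i)`. -/
def Scattered {d : ℕ} (Γ : Fin d → Language D) (I : Set (CSPConstraint V D)) : Prop :=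
  ∀ C ∈ I, ∃ i : Fin d, ∀ C' ∈ I, SameComp I ∅ C C' → inLang (Γ i) C'

/-- `B` is a strong backdoor of `I` into the scattered class. -/
def StrongBackdoor {d : ℕ} (Γ : Fin d → Language D) (I : Set (CSPConstraint V D))
    (B : Set V) : Prop :=
  ∀ α : V → Option D, OnSet α B → Scattered Γ (restrictI I α)

/-- A set of at most `d` constraints forbidden with respect to `S`. -/
def Forbidden {d : ℕ} (Γ : Fin d → Language D) (Cs : Set (CSPConstraint V D))
    (S : Set V) : Prop :=
  Cs.Finite ∧ Cs.ncard ≤ d ∧ ∃ τ : V → Option D, OnSet τ S ∧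
    ∀ i : Fin d, ∃ C ∈ Cs, ¬ inLang (Γ i) (restrictC C τ)

def Satisfies (β : V → D) (C : CSPConstraint V D) : Prop := C.scope.map β ∈ C.rel

/-- The incidence graph of an instance: variables on one side, constraints on the other. -/
def incGraph (I : Set (CSPConstraint V D)) : SimpleGraph (V ⊕ CSPConstraint V D) where
  Adj a b := ∃ v C, C ∈ I ∧ v ∈ C.scope ∧
    ((a = Sum.inl v ∧ b = Sum.inr C) ∨ (a = Sum.inr C ∧ b = Sum.inl v))
  symm := by
    constructor
    rintro a b ⟨v, C, hC, hv, h⟩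
    exact ⟨v, C, hC, hv, by tauto⟩
  loopless := by
    constructor
    rintro a ⟨v, C, -, -, (⟨h1, h2⟩ | ⟨h1, h2⟩)⟩ <;> subst h1 <;> simp at h2

/-- Reachability in a graph avoiding the vertex set `T`. -/
def ReachAvoid {W : Type} (G : SimpleGraph W) (T : Set W) (a b : W) : Prop :=
  a ∉ T ∧ b ∉ T ∧ Relation.ReflTransGen (fun x y => G.Adj x y ∧ x ∉ T ∧ y ∉ T) a b

/-- `R(X,T)` : the vertices reachable from `X` after deleting `T`. -/
def RSet {W : Type} (G : SimpleGraph W) (X T : Set W) : Set W :=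
  {v | ∃ x ∈ X, ReachAvoid G T x v}

def IsXYSep {W : Type} (G : SimpleGraph W) (X Y S : Set W) : Prop :=
  Disjoint S (X ∪ Y) ∧ ∀ y ∈ Y, y ∉ RSet G X S

/-- `S₁` covers `S₂` with respect to `X`. -/
def Covers {W : Type} (G : SimpleGraph W) (X S₁ S₂ : Set W) : Prop :=
  RSet G X S₂ ⊂ RSet G X S₁

def Dominates {W : Type} (G : SimpleGraph W) (X S₁ S₂ : Set W) : Prop :=
  S₁.ncard ≤ S₂.ncard ∧ Covers G X S₁ S₂

def MinimalSep {W : Type} (G : SimpleGraph W) (X Y S : Set W) : Prop :=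
  IsXYSep G X Y S ∧ ∀ S' ⊂ S, ¬ IsXYSep G X Y S'

def ImportantSep {W : Type} (G : SimpleGraph W) (X Y S : Set W) : Prop :=
  MinimalSep G X Y S ∧ ¬ ∃ S', IsXYSep G X Y S' ∧ S' ≠ S ∧ Dominates G X S' S

/-- `X` is a `W₁`–`W₂` separator (of variables) in `B_S`, the incidence graph with the
variables of `S` deleted. -/
def SepIn (I : Set (CSPConstraint V D)) (S W₁ W₂ X : Set V) : Prop :=
  Disjoint X (S ∪ W₁ ∪ W₂) ∧
  ∀ w₁ ∈ W₁, ∀ w₂ ∈ W₂,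
    ¬ ReachAvoid (incGraph I) (Sum.inl '' (S ∪ X)) (Sum.inl w₁) (Sum.inl w₂)

/-- `R_{B_S}(W₁,X)` : vertices of the incidence graph reachable from `W₁` in `B_S − X`. -/
def Region (I : Set (CSPConstraint V D)) (S W₁ X : Set V) : Set (V ⊕ CSPConstraint V D) :=
  RSet (incGraph I) (Sum.inl '' W₁) (Sum.inl '' (S ∪ X))

/-- The sub-instance `I[R_{B_S}[W₁,X] ∪ S]`. -/
def SubInst (I : Set (CSPConstraint V D)) (S W₁ X : Set V) : Set (CSPConstraint V D) :=
  {C | C ∈ I ∧ ∀ v ∈ C.scope, v ∈ S ∨ v ∈ X ∨ Sum.inl v ∈ Region I S W₁ X}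

/-- The separator `X` in `B_S` is `ℓ`-good. -/
def Good {d : ℕ} (Γ : Fin d → Language D) (I : Set (CSPConstraint V D))
    (S W₁ X : Set V) (ℓ : ℕ) : Prop :=
  ∃ K : Set V, K.Finite ∧ K.ncard ≤ ℓ ∧ StrongBackdoor Γ (SubInst I S W₁ X) (K ∪ X ∪ S)

/-- A solution of the extended backdoor compression instance `(I,k,S,W)` : a strong
backdoor of size at most `k` containing `S` and disjoint from `W`. -/
def Solution {d : ℕ} (Γ : Fin d → Language D) (I : Set (CSPConstraint V D))
    (k : ℕ) (S W Z : Set V) : Prop :=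
  S ⊆ Z ∧ Disjoint Z W ∧ Z.Finite ∧ Z.ncard ≤ k ∧ StrongBackdoor Γ I Z

end CSP

/-- `X` together with its neighbouring constraints, in the incidence graph of `I`. -/
def NXSet {V D : Type} (I : Set (CSPConstraint V D)) (X : Set V) :
    Set (V ⊕ CSPConstraint V D) :=
  Sum.inl '' X ∪ {a | ∃ C ∈ I, a = Sum.inr C ∧ ∃ v ∈ X, v ∈ C.scope}

/-- In a minimal `X`–`Y` separator, every vertex has a neighbour in `R(X,S)`. -/
lemma minimalSep_neighbor {W : Type} (G : SimpleGraph W) (X Y S : Set W)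
    (h : CSP.MinimalSep G X Y S) :
    ∀ s ∈ S, ∃ w ∈ CSP.RSet G X S, G.Adj w s := by
  intro s hs
  by_contra hcon
  push_neg at hcon
  apply h.2 (S \ {s}) (Set.sdiff_singleton_ssubset.mpr hs)
  constructor
  · exact h.1.1.mono_left Set.diff_subset
  · intro y hy hmem
    obtain ⟨x, hx, _, _, hchain⟩ := hmem
    have hxS : x ∉ S := fun hxS => h.1.1.ne_of_mem hxS (Or.inl hx) rfl
    have key : ∀ b, Relation.ReflTransGen
        (fun p q => G.Adj p q ∧ p ∉ S \ {s} ∧ q ∉ S \ {s}) x b → b ∈ CSP.RSet G X S := by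
      intro b hb
      induction hb with
      | refl => exact ⟨x, hx, hxS, hxS, Relation.ReflTransGen.refl⟩
      | @tail b c _ hbc ih =>
        obtain ⟨hadj, _, hcns⟩ := hbc
        obtain ⟨x', hx', hx'S, hbS, hchain'⟩ := ih
        have hcS : c ∉ S := by
          intro hcS
          have hcs : c = s := by
            by_contra hne
            exact hcns ⟨hcS, hne⟩
          subst hcs
          exact hcon b ⟨x', hx', hx'S, hbS, hchain'⟩ hadj
        exact ⟨x', hx', hx'S, hcS, hchain'.tail ⟨hadj, hbS, hcS⟩⟩
    exact h.1.2 y hy (key y hchain)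

/-- in the incidence graph, if `S₁`, `S₂` are minimal `X`–`Y` separators
(of variables) and `S₂` dominates `S₁`, then `S₂` disconnects `S₁ \ S₂` from `Y`. -/
theorem stmt9 {V D : Type} (I : Set (CSPConstraint V D)) (X Y : Set V)
    (hdisj : Disjoint X Y)
    (hconn : ∀ a ∈ NXSet I X, ∀ b ∈ NXSet I X,
      CSP.ReachAvoid (CSP.incGraph I) (NXSet I X)ᶜ a b)
    (S₁ S₂ : Set V)
    (h1 : CSP.MinimalSep (CSP.incGraph I) (Sum.inl '' X) (Sum.inl '' Y) (Sum.inl '' S₁))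
    (h2 : CSP.MinimalSep (CSP.incGraph I) (Sum.inl '' X) (Sum.inl '' Y) (Sum.inl '' S₂))
    (hdom : CSP.Dominates (CSP.incGraph I) (Sum.inl '' X) (Sum.inl '' S₂) (Sum.inl '' S₁)) :
    ∀ v ∈ S₁ \ S₂, ∀ y ∈ Y,
      ¬ CSP.ReachAvoid (CSP.incGraph I) (Sum.inl '' S₂) (Sum.inl v) (Sum.inl y) := by
  intro v hv y hy hreach
  set G := CSP.incGraph I
  obtain ⟨w, hw, hadj⟩ := minimalSep_neighbor G (Sum.inl '' X) (Sum.inl '' Y)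
    (Sum.inl '' S₁) h1 (Sum.inl v) ⟨v, hv.1, rfl⟩
  have hw2 : w ∈ CSP.RSet G (Sum.inl '' X) (Sum.inl '' S₂) := hdom.2.subset hw
  obtain ⟨x, hx, hxnot, hwnot, hchain⟩ := hw2
  have hvnot : Sum.inl v ∉ (Sum.inl '' S₂ : Set (V ⊕ CSPConstraint V D)) := by
    rintro ⟨u, hu, he⟩
    exact hv.2 (Sum.inl.inj he ▸ hu)
  obtain ⟨_, hynot, hchain2⟩ := hreach
  have : Sum.inl y ∈ CSP.RSet G (Sum.inl '' X) (Sum.inl '' S₂) :=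
    ⟨x, hx, hxnot, hynot, ((hchain.tail ⟨hadj, hwnot, hvnot⟩).trans hchain2)⟩
  exact h2.1.2 (Sum.inl y) ⟨y, hy, rfl⟩ this
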